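/- Let a, c be real quaternions with a ≠ 0 and a + star a ≠ 0 (equivalently, the real part of a is nonzero), where star denotes quaternion conjugation. Then x := (2·(a + star a))⁻¹·(c + a⁻¹·c·(star a)) satisfies the equation a·x + x·a = c. -/
import Mathlib

theorem quaternion_sylvester_equal_coeffs (a c : Quaternion ℝ)
    (ha : a ≠ 0) (has : a + star a ≠ 0) :
    a * ((2 * (a + star a))⁻¹ * (c + a⁻¹ * c * star a)) +
      ((2 * (a + star a))⁻¹ * (c + a⁻¹ * c * star a)) * a = c := by
  have hr : (2 * a.re : ℝ) ≠ 0 := by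
    intro h
    apply has
    rw [Quaternion.self_add_star', h, Quaternion.coe_zero]
  have hinv : (2 * (a + star a))⁻¹ = ((2 * (2 * a.re))⁻¹ : ℝ) := by
    have h2 : ((2:ℝ):Quaternion ℝ) = 2 := by norm_cast
    rw [Quaternion.self_add_star', ← h2, ← Quaternion.coe_mul, ← Quaternion.coe_inv]
  have key : a⁻¹ * c * star a * a = star a * c := by
    rw [mul_assoc, mul_assoc, Quaternion.star_mul_self, ← Quaternion.coe_commutes,
      ← mul_assoc, ← Quaternion.self_mul_star, ← mul_assoc, inv_mul_cancel₀ ha, one_mul]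
  have h1 : a * (a⁻¹ * c * star a) = c * star a := by
    rw [← mul_assoc, ← mul_assoc, mul_inv_cancel₀ ha, one_mul]
  have hmul : a * (c + a⁻¹ * c * star a) + (c + a⁻¹ * c * star a) * a
      = (2 * (2 * a.re)) • c := by
    rw [mul_add, add_mul, h1, key]
    have h2 := Quaternion.self_add_star' a
    calc a * c + c * star a + (c * a + star a * c)
        = (a + star a) * c + c * (a + star a) := by noncomm_ring
      _ = (2 * (2 * a.re)) • c := by
          rw [h2, ← Quaternion.coe_commutes, Quaternion.coe_mul_eq_smul, ← two_smul ℝ,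
            smul_smul]
  rw [hinv, Quaternion.coe_mul_eq_smul, mul_smul_comm, smul_mul_assoc, ← smul_add, hmul,
    smul_smul, inv_mul_cancel₀ (mul_ne_zero two_ne_zero hr), one_smul]
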